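/- Let χ be a nonnegative kernel with m_2(χ) < ∞ and inf_{[1,e]} χ = η > 0. Let f : ℝ⁺ → [0,∞) be bounded and log-continuous at a point x ∈ ℝ⁺ (i.e., continuous in the variable log x). Then lim_{w → ∞} MG_w^χ(f, x) = f(x). -/

import Mathlib

/-- Max-product generalized exponential sampling operator with global index set ℤ. -/
noncomputable def MGZ (χ f : ℝ → ℝ) (w x : ℝ) : ℝ :=
  (⨆ k : ℤ, χ (Real.exp (-(k:ℝ)) * x ^ w) * f (Real.exp ((k:ℝ) / w))) /
  (⨆ k : ℤ, χ (Real.exp (-(k:ℝ)) * x ^ w))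

/-- pointwise convergence at each log-continuity point. -/
theorem stmt10 (χ : ℝ → ℝ) (hχ0 : ∀ u : ℝ, 0 ≤ χ u)
    (m0 m1 m2 : ℝ)
    (hm0 : ∀ u > (0:ℝ), ∀ k : ℤ, |χ (Real.exp (-(k:ℝ)) * u)| ≤ m0)
    (hm1 : ∀ u > (0:ℝ), ∀ k : ℤ,
      |χ (Real.exp (-(k:ℝ)) * u)| * |(k:ℝ) - Real.log u| ≤ m1)
    (hm2 : ∀ u > (0:ℝ), ∀ k : ℤ,
      |χ (Real.exp (-(k:ℝ)) * u)| * |(k:ℝ) - Real.log u| ^ 2 ≤ m2)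
    (η : ℝ) (hη : 0 < η) (hinf : ∀ x ∈ Set.Icc (1:ℝ) (Real.exp 1), η ≤ χ x)
    (f : ℝ → ℝ) (hf0 : ∀ y > (0:ℝ), 0 ≤ f y) (Bf : ℝ) (hfb : ∀ y > (0:ℝ), f y ≤ Bf)
    (x : ℝ) (hx : 0 < x)
    (hcont : ∀ ε > (0:ℝ), ∃ δ > (0:ℝ), ∀ y > (0:ℝ),
      |Real.log y - Real.log x| ≤ δ → |f y - f x| < ε) :
    Filter.Tendsto (fun w => MGZ χ f w x) Filter.atTop (nhds (f x)) := by
  have hfx0 : 0 ≤ f x := hf0 x hx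
  have hBf0 : 0 ≤ Bf := le_trans hfx0 (hfb x hx)
  have hm0η : η ≤ m0 := by
    have h1 : η ≤ χ 1 := hinf 1 ⟨le_refl 1, Real.one_le_exp zero_le_one⟩
    have h2 : |χ (Real.exp (-(0:ℤ):ℝ) * 1)| ≤ m0 := hm0 1 one_pos 0
    simp only [Int.cast_zero, neg_zero, Real.exp_zero, one_mul] at h2
    exact le_trans h1 (le_trans (le_abs_self _) h2)
  have hm0pos : 0 < m0 := lt_of_lt_of_le hη hm0η
  have hm2nn : 0 ≤ m2 := by
    have := hm2 1 one_pos 0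
    simp only [Int.cast_zero, Real.log_one, sub_zero, abs_zero] at this
    nlinarith [abs_nonneg (χ (Real.exp (-(0:ℤ):ℝ) * 1))]
  rw [Metric.tendsto_atTop]
  intro ε hε
  set ε₁ : ℝ := ε * η / (2 * m0) with hε₁def
  have hε₁pos : 0 < ε₁ := by positivity
  obtain ⟨δ, hδpos, hδ⟩ := hcont ε₁ hε₁pos
  -- eventually bound for the tail term
  have htail : Filter.Tendsto (fun w : ℝ => Bf * m2 / (δ * w) ^ 2) Filter.atTop (nhds 0) := by
    have h0 : Filter.Tendsto (fun w : ℝ => δ * w) Filter.atTop Filter.atTop :=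
      Filter.Tendsto.const_mul_atTop hδpos Filter.tendsto_id
    have h1 : Filter.Tendsto (fun w : ℝ => (δ * w) ^ 2) Filter.atTop Filter.atTop :=
      (Filter.tendsto_pow_atTop (two_ne_zero)).comp h0
    exact Filter.Tendsto.div_atTop (tendsto_const_nhds (α := ℝ) (f := Filter.atTop)) h1
  have hev : ∀ᶠ w : ℝ in Filter.atTop, Bf * m2 / (δ * w) ^ 2 < ε * η / 2 :=
    htail.eventually (gt_mem_nhds (by positivity))
  obtain ⟨N₁, hN₁⟩ := Filter.eventually_atTop.mp hev
  refine ⟨max 1 N₁, fun w hw => ?_⟩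
  have hw1 : (1:ℝ) ≤ w := le_trans (le_max_left _ _) hw
  have hwN : N₁ ≤ w := le_trans (le_max_right _ _) hw
  have hwpos : (0:ℝ) < w := lt_of_lt_of_le one_pos hw1
  set g : ℤ → ℝ := fun k => χ (Real.exp (-(k:ℝ)) * x ^ w) with hg
  set F : ℤ → ℝ := fun k => g k * f (Real.exp ((k:ℝ) / w)) with hF
  have hxw : (0:ℝ) < x ^ w := Real.rpow_pos_of_pos hx w
  have hlogxw : Real.log (x ^ w) = w * Real.log x := Real.log_rpow hx w
  have hg0 : ∀ k, 0 ≤ g k := fun k => hχ0 _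
  have hgb : ∀ k, g k ≤ m0 := fun k => le_trans (le_abs_self _) (hm0 _ hxw k)
  have hekpos : ∀ k : ℤ, (0:ℝ) < Real.exp ((k:ℝ) / w) := fun k => Real.exp_pos _
  have hF0 : ∀ k, 0 ≤ F k := fun k => mul_nonneg (hg0 k) (hf0 _ (hekpos k))
  have hFb : ∀ k, F k ≤ m0 * Bf := fun k =>
    mul_le_mul (hgb k) (hfb _ (hekpos k)) (hf0 _ (hekpos k)) (le_of_lt hm0pos)
  have bddg : BddAbove (Set.range g) := ⟨m0, by rintro _ ⟨k, rfl⟩; exact hgb k⟩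
  have bddF : BddAbove (Set.range F) := ⟨m0 * Bf, by rintro _ ⟨k, rfl⟩; exact hFb k⟩
  set D : ℝ := ⨆ k : ℤ, g k with hD
  set Num : ℝ := ⨆ k : ℤ, F k with hNum
  -- denominator lower bound
  have hDη : η ≤ D := by
    set k₀ : ℤ := ⌊w * Real.log x⌋ with hk₀
    have h1 : Real.exp (-(k₀:ℝ)) * x ^ w = Real.exp (w * Real.log x - k₀) := by
      rw [Real.rpow_def_of_pos hx, ← Real.exp_add]
      ring_nf
    have h2 : (0:ℝ) ≤ w * Real.log x - k₀ := sub_nonneg.mpr (Int.floor_le _)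
    have h3 : w * Real.log x - k₀ ≤ 1 := by
      have := Int.lt_floor_add_one (w * Real.log x)
      linarith
    have h4 : η ≤ g k₀ := by
      rw [hg]
      simp only [h1]
      exact hinf _ ⟨by simpa using Real.exp_le_exp.mpr h2 |>.trans_eq' Real.exp_zero,
        Real.exp_le_exp.mpr h3⟩
    exact le_trans h4 (le_ciSup bddg k₀)
  have hDpos : 0 < D := lt_of_lt_of_le hη hDη
  set S : ℝ := m0 * ε₁ + Bf * m2 / (δ * w) ^ 2 with hS
  have hδw : (0:ℝ) < δ * w := mul_pos hδpos hwpos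
  have hSnn : 0 ≤ S := by positivity
  -- per-index estimate
  have key : ∀ k : ℤ, g k * |f (Real.exp ((k:ℝ) / w)) - f x| ≤ S := by
    intro k
    by_cases hc : |(k:ℝ) / w - Real.log x| ≤ δ
    · have h5 : |f (Real.exp ((k:ℝ) / w)) - f x| < ε₁ := by
        apply hδ _ (hekpos k)
        rwa [Real.log_exp]
      have : g k * |f (Real.exp ((k:ℝ) / w)) - f x| ≤ m0 * ε₁ :=
        mul_le_mul (hgb k) (le_of_lt h5) (abs_nonneg _) (le_of_lt hm0pos)
      have h6 : 0 ≤ Bf * m2 / (δ * w) ^ 2 := by positivity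
      linarith
    · push_neg at hc
      have h7 : δ * w < |(k:ℝ) - w * Real.log x| := by
        have he : (k:ℝ) - w * Real.log x = w * ((k:ℝ) / w - Real.log x) := by
          rw [mul_sub, mul_div_cancel₀ _ hwpos.ne']
        rw [he, abs_mul, abs_of_pos hwpos, mul_comm δ w]
        exact (mul_lt_mul_iff_right₀ hwpos).mpr hc
      have h8 : g k * |(k:ℝ) - w * Real.log x| ^ 2 ≤ m2 := by
        have := hm2 (x ^ w) hxw k
        rwa [hlogxw, abs_of_nonneg (hg0 k)] at this
      have h9 : (δ * w) ^ 2 ≤ |(k:ℝ) - w * Real.log x| ^ 2 := by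
        apply pow_le_pow_left₀ (le_of_lt hδw) (le_of_lt h7)
      have h10 : g k ≤ m2 / (δ * w) ^ 2 := by
        rw [le_div_iff₀ (by positivity)]
        calc g k * (δ * w) ^ 2 ≤ g k * |(k:ℝ) - w * Real.log x| ^ 2 :=
              mul_le_mul_of_nonneg_left h9 (hg0 k)
        _ ≤ m2 := h8
      have h11 : |f (Real.exp ((k:ℝ) / w)) - f x| ≤ Bf := by
        rw [abs_sub_le_iff]
        constructor
        · linarith [hfb _ (hekpos k), hfx0]
        · linarith [hfb x hx, hf0 _ (hekpos k)]
      have h12 : g k * |f (Real.exp ((k:ℝ) / w)) - f x| ≤ (m2 / (δ * w) ^ 2) * Bf :=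
        mul_le_mul h10 h11 (abs_nonneg _) (by positivity)
      have h13 : (m2 / (δ * w) ^ 2) * Bf = Bf * m2 / (δ * w) ^ 2 := by ring
      have h14 : 0 ≤ m0 * ε₁ := by positivity
      rw [h13] at h12
      linarith
  -- Num ≤ f x * D + S
  have hub : Num ≤ f x * D + S := by
    apply ciSup_le
    intro k
    have h1 : F k ≤ g k * f x + g k * |f (Real.exp ((k:ℝ) / w)) - f x| := by
      have h1a : f (Real.exp ((k:ℝ) / w)) - f x ≤ |f (Real.exp ((k:ℝ) / w)) - f x| :=
        le_abs_self _
      have h1b := mul_le_mul_of_nonneg_left h1a (hg0 k)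
      rw [mul_sub] at h1b
      have hFk : F k = g k * f (Real.exp ((k:ℝ) / w)) := rfl
      rw [hFk]; linarith
    have h2 : g k * f x ≤ D * f x :=
      mul_le_mul_of_nonneg_right (le_ciSup bddg k) hfx0
    calc F k ≤ g k * f x + g k * |f (Real.exp ((k:ℝ) / w)) - f x| := h1
    _ ≤ D * f x + S := add_le_add h2 (key k)
    _ = f x * D + S := by ring
  -- f x * D ≤ Num + S
  have hlb : f x * D ≤ Num + S := by
    rcases eq_or_lt_of_le hfx0 with h0 | h0
    · have hNum0 : 0 ≤ Num := le_trans (hF0 0) (le_ciSup bddF 0)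
      rw [← h0]
      simpa using add_nonneg hNum0 hSnn
    · rw [mul_comm, ← le_div_iff₀ h0]
      apply ciSup_le
      intro k
      rw [le_div_iff₀ h0]
      have h1 : g k * f x ≤ F k + g k * |f (Real.exp ((k:ℝ) / w)) - f x| := by
        have h1a : f x - f (Real.exp ((k:ℝ) / w)) ≤ |f (Real.exp ((k:ℝ) / w)) - f x| := by
          rw [abs_sub_comm]; exact le_abs_self _
        have h1b := mul_le_mul_of_nonneg_left h1a (hg0 k)
        rw [mul_sub] at h1b
        have hFk : F k = g k * f (Real.exp ((k:ℝ) / w)) := rfl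
        rw [hFk]; linarith
      exact le_trans h1 (add_le_add (le_ciSup bddF k) (key k))
  have habs : |Num - f x * D| ≤ S := abs_sub_le_iff.mpr ⟨by linarith, by linarith⟩
  have hfinal : |MGZ χ f w x - f x| ≤ S / η := by
    have hMGZ : MGZ χ f w x = Num / D := rfl
    rw [hMGZ]
    have h1 : Num / D - f x = (Num - f x * D) / D := by
      field_simp
    rw [h1, abs_div, abs_of_pos hDpos]
    calc |Num - f x * D| / D ≤ S / D := by gcongr
    _ ≤ S / η := by gcongr
  rw [Real.dist_eq]
  have hS' : S < ε * η := by
    have h1 : m0 * ε₁ = ε * η / 2 := by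
      rw [hε₁def]; field_simp
    have h2 := hN₁ w hwN
    rw [hS, h1]
    linarith
  calc |MGZ χ f w x - f x| ≤ S / η := hfinal
  _ < (ε * η) / η := (div_lt_div_iff_of_pos_right hη).mpr hS'
  _ = ε := by field_simp
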